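/- Let d ≥ 1 and let W = (w_1,…,w_d) and W' = (w'_1,…,w'_d) be weight vectors with all entries positive; set M = max_{1≤i≤d}(w_i² / w'_i²) and N = min_{1≤i≤d}(w_i² / w'_i²). For every R > 0, every c > 1, and all nonzero x, y ∈ ℝ^d: if D_{W'}(x,y) ≥ cR, then D_W(x,y) ≥ arccos( min( 1, (M/N)·cos(cR) + (M − N)/N ) ). -/

import Mathlib

open Real Finset

private lemma antitone_arccos : Antitone Real.arccos := fun a b hab => by
  simp only [Real.arccos]
  exact sub_le_sub_left (Real.monotone_arcsin hab) _

/-- 2D Cauchy–Schwarz for square roots. -/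
private lemma sqrt_two_cs (p1 p2 q1 q2 : ℝ) (hp1 : 0 ≤ p1) (hp2 : 0 ≤ p2)
    (hq1 : 0 ≤ q1) (hq2 : 0 ≤ q2) :
    Real.sqrt p1 * Real.sqrt q1 + Real.sqrt p2 * Real.sqrt q2 ≤
      Real.sqrt (p1 + p2) * Real.sqrt (q1 + q2) := by
  have ha1 : Real.sqrt p1 ^ 2 = p1 := Real.sq_sqrt hp1
  have ha2 : Real.sqrt p2 ^ 2 = p2 := Real.sq_sqrt hp2
  have hb1 : Real.sqrt q1 ^ 2 = q1 := Real.sq_sqrt hq1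
  have hb2 : Real.sqrt q2 ^ 2 = q2 := Real.sq_sqrt hq2
  have hr : (Real.sqrt (p1 + p2) * Real.sqrt (q1 + q2)) ^ 2 = (p1 + p2) * (q1 + q2) := by
    rw [mul_pow, Real.sq_sqrt (by linarith), Real.sq_sqrt (by linarith)]
  have hL : 0 ≤ Real.sqrt p1 * Real.sqrt q1 + Real.sqrt p2 * Real.sqrt q2 := by positivity
  have hR : 0 ≤ Real.sqrt (p1 + p2) * Real.sqrt (q1 + q2) := by positivity
  nlinarith [sq_nonneg (Real.sqrt p1 * Real.sqrt q2 - Real.sqrt p2 * Real.sqrt q1)]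

/-- Cauchy–Schwarz: absolute value of inner product bounded by product of norms. -/
private lemma abs_inner_le {d : ℕ} (f g : Fin d → ℝ) :
    |∑ i, f i * g i| ≤ Real.sqrt (∑ i, f i ^ 2) * Real.sqrt (∑ i, g i ^ 2) := by
  have h := Finset.sum_mul_sq_le_sq_mul_sq Finset.univ f g
  have h1 : 0 ≤ ∑ i, f i ^ 2 := Finset.sum_nonneg fun i _ => sq_nonneg _
  have h2 : 0 ≤ ∑ i, g i ^ 2 := Finset.sum_nonneg fun i _ => sq_nonneg _
  rw [← Real.sqrt_mul h1]
  calc |∑ i, f i * g i| = Real.sqrt ((∑ i, f i * g i) ^ 2) := (Real.sqrt_sq_eq_abs _).symm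
    _ ≤ Real.sqrt ((∑ i, f i ^ 2) * ∑ i, g i ^ 2) := Real.sqrt_le_sqrt h

/-- Weighted Cauchy–Schwarz lower bound with nonnegative weights. -/
private lemma weighted_cs {d : ℕ} (c u v : Fin d → ℝ) (hc : ∀ i, 0 ≤ c i) :
    -(∑ i, c i * (u i * v i)) ≤
      Real.sqrt (∑ i, c i * u i ^ 2) * Real.sqrt (∑ i, c i * v i ^ 2) := by
  have key := abs_inner_le (fun i => Real.sqrt (c i) * u i) (fun i => Real.sqrt (c i) * v i)
  have e1 : ∀ i : Fin d, (Real.sqrt (c i) * u i) * (Real.sqrt (c i) * v i)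
      = c i * (u i * v i) := by
    intro i
    have hss : Real.sqrt (c i) * Real.sqrt (c i) = c i := Real.mul_self_sqrt (hc i)
    calc (Real.sqrt (c i) * u i) * (Real.sqrt (c i) * v i)
        = (Real.sqrt (c i) * Real.sqrt (c i)) * (u i * v i) := by ring
      _ = c i * (u i * v i) := by rw [hss]
  have e2 : ∀ i : Fin d, (Real.sqrt (c i) * u i) ^ 2 = c i * u i ^ 2 := by
    intro i; rw [mul_pow, Real.sq_sqrt (hc i)]
  have e3 : ∀ i : Fin d, (Real.sqrt (c i) * v i) ^ 2 = c i * v i ^ 2 := by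
    intro i; rw [mul_pow, Real.sq_sqrt (hc i)]
  rw [Finset.sum_congr rfl (fun i _ => e1 i), Finset.sum_congr rfl (fun i _ => e2 i),
    Finset.sum_congr rfl (fun i _ => e3 i)] at key
  linarith [neg_abs_le (∑ i, c i * (u i * v i)), key]

/-- Key inequality: the W-inner-product plus W-norms product is bounded by
`M` times the analogous primed quantity. -/
private lemma key_ineq {d : ℕ} (b u v : Fin d → ℝ) (M : ℝ) (hM : 0 ≤ M)
    (hb : ∀ i, (b i) ^ 2 ≤ M) :
    (∑ i, (b i * u i) * (b i * v i)) +
      Real.sqrt (∑ i, (b i * u i) ^ 2) * Real.sqrt (∑ i, (b i * v i) ^ 2) ≤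
    M * (Real.sqrt (∑ i, u i ^ 2) * Real.sqrt (∑ i, v i ^ 2) + ∑ i, u i * v i) := by
  set cw : Fin d → ℝ := fun i => M - (b i) ^ 2 with hcw
  have hcnn : ∀ i, 0 ≤ cw i := fun i => by simp [hcw]; linarith [hb i]
  -- A = M⟨u,v⟩ - ∑ c_i u_i v_i
  have hA : (∑ i, (b i * u i) * (b i * v i))
      = M * (∑ i, u i * v i) - ∑ i, cw i * (u i * v i) := by
    rw [Finset.mul_sum, ← Finset.sum_sub_distrib]
    refine Finset.sum_congr rfl fun i _ => by simp [hcw]; ring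
  have hsu : (∑ i, (b i * u i) ^ 2) = M * (∑ i, u i ^ 2) - ∑ i, cw i * u i ^ 2 := by
    rw [Finset.mul_sum, ← Finset.sum_sub_distrib]
    refine Finset.sum_congr rfl fun i _ => by simp [hcw]; ring
  have hsv : (∑ i, (b i * v i) ^ 2) = M * (∑ i, v i ^ 2) - ∑ i, cw i * v i ^ 2 := by
    rw [Finset.mul_sum, ← Finset.sum_sub_distrib]
    refine Finset.sum_congr rfl fun i _ => by simp [hcw]; ring
  have hwcs := weighted_cs cw u v hcnn
  -- 2D Cauchy-Schwarz step
  have hp1 : 0 ≤ ∑ i, (b i * u i) ^ 2 := Finset.sum_nonneg fun i _ => sq_nonneg _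
  have hq1 : 0 ≤ ∑ i, (b i * v i) ^ 2 := Finset.sum_nonneg fun i _ => sq_nonneg _
  have hp2 : 0 ≤ ∑ i, cw i * u i ^ 2 :=
    Finset.sum_nonneg fun i _ => mul_nonneg (hcnn i) (sq_nonneg _)
  have hq2 : 0 ≤ ∑ i, cw i * v i ^ 2 :=
    Finset.sum_nonneg fun i _ => mul_nonneg (hcnn i) (sq_nonneg _)
  have h2d := sqrt_two_cs (∑ i, (b i * u i) ^ 2) (∑ i, cw i * u i ^ 2)
    (∑ i, (b i * v i) ^ 2) (∑ i, cw i * v i ^ 2) hp1 hp2 hq1 hq2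
  have hsum_u : (∑ i, (b i * u i) ^ 2) + (∑ i, cw i * u i ^ 2) = M * (∑ i, u i ^ 2) := by
    rw [hsu]; ring
  have hsum_v : (∑ i, (b i * v i) ^ 2) + (∑ i, cw i * v i ^ 2) = M * (∑ i, v i ^ 2) := by
    rw [hsv]; ring
  rw [hsum_u, hsum_v] at h2d
  have hmu : Real.sqrt (M * (∑ i, u i ^ 2)) = Real.sqrt M * Real.sqrt (∑ i, u i ^ 2) :=
    Real.sqrt_mul hM _
  have hmv : Real.sqrt (M * (∑ i, v i ^ 2)) = Real.sqrt M * Real.sqrt (∑ i, v i ^ 2) :=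
    Real.sqrt_mul hM _
  have hMM : Real.sqrt M * Real.sqrt M = M := Real.mul_self_sqrt hM
  rw [hmu, hmv] at h2d
  have h2d' : Real.sqrt (∑ i, (b i * u i) ^ 2) * Real.sqrt (∑ i, (b i * v i) ^ 2)
      + Real.sqrt (∑ i, cw i * u i ^ 2) * Real.sqrt (∑ i, cw i * v i ^ 2)
      ≤ M * (Real.sqrt (∑ i, u i ^ 2) * Real.sqrt (∑ i, v i ^ 2)) := by
    calc _ ≤ Real.sqrt M * Real.sqrt (∑ i, u i ^ 2) * (Real.sqrt M * Real.sqrt (∑ i, v i ^ 2)) := h2d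
      _ = M * (Real.sqrt (∑ i, u i ^ 2) * Real.sqrt (∑ i, v i ^ 2)) := by
          rw [show Real.sqrt M * Real.sqrt (∑ i, u i ^ 2) * (Real.sqrt M * Real.sqrt (∑ i, v i ^ 2))
            = (Real.sqrt M * Real.sqrt M) * (Real.sqrt (∑ i, u i ^ 2) * Real.sqrt (∑ i, v i ^ 2)) by ring, hMM]
  linarith [hA, hwcs, h2d']

set_option maxHeartbeats 1000000 in
theorem weighted_angular_lower_bound
    (d : ℕ) (hd : 1 ≤ d)
    (W W' : Fin d → ℝ) (hW : ∀ i, 0 < W i) (hW' : ∀ i, 0 < W' i)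
    (M N : ℝ)
    (hM : M = Finset.univ.sup' (Finset.univ_nonempty_iff.mpr (Fin.pos_iff_nonempty.mp hd))
        (fun i => (W i) ^ 2 / (W' i) ^ 2))
    (hN : N = Finset.univ.inf' (Finset.univ_nonempty_iff.mpr (Fin.pos_iff_nonempty.mp hd))
        (fun i => (W i) ^ 2 / (W' i) ^ 2))
    (R : ℝ) (hR : 0 < R) (c : ℝ) (hc : 1 < c)
    (x y : Fin d → ℝ) (hx : x ≠ 0) (hy : y ≠ 0)
    (h : c * R ≤ Real.arccos ((∑ i, (W' i * x i) * (W' i * y i)) /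
          (Real.sqrt (∑ i, (W' i * x i) ^ 2) * Real.sqrt (∑ i, (W' i * y i) ^ 2)))) :
    Real.arccos (min 1 (M / N * Real.cos (c * R) + (M - N) / N)) ≤
      Real.arccos ((∑ i, (W i * x i) * (W i * y i)) /
          (Real.sqrt (∑ i, (W i * x i) ^ 2) * Real.sqrt (∑ i, (W i * y i) ^ 2))) := by
  -- basic facts about M and N
  have hbound : ∀ i : Fin d, N ≤ (W i) ^ 2 / (W' i) ^ 2 ∧ (W i) ^ 2 / (W' i) ^ 2 ≤ M := by
    intro i
    constructor
    · rw [hN]; exact Finset.inf'_le (fun j => (W j) ^ 2 / (W' j) ^ 2) (Finset.mem_univ i)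
    · rw [hM]; exact Finset.le_sup' (fun j => (W j) ^ 2 / (W' j) ^ 2) (Finset.mem_univ i)
  have hN0 : 0 < N := by
    rw [hN]
    rw [Finset.lt_inf'_iff]
    intro i _
    exact div_pos (pow_pos (hW i) 2) (pow_pos (hW' i) 2)
  obtain ⟨i0⟩ : Nonempty (Fin d) := Fin.pos_iff_nonempty.mp hd
  have hNM : N ≤ M := le_trans (hbound i0).1 (hbound i0).2
  have hM0 : 0 < M := lt_of_lt_of_le hN0 hNM
  -- b, and rewriting of W-quantities
  set b : Fin d → ℝ := fun i => W i / W' i with hb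
  have hbrw : ∀ i, W i * x i = b i * (W' i * x i) := by
    intro i
    simp only [hb]
    rw [div_mul_eq_mul_div, eq_div_iff (hW' i).ne']
    ring
  have hbrw' : ∀ i, W i * y i = b i * (W' i * y i) := by
    intro i
    simp only [hb]
    rw [div_mul_eq_mul_div, eq_div_iff (hW' i).ne']
    ring
  have hbsq : ∀ i, (b i) ^ 2 = (W i) ^ 2 / (W' i) ^ 2 := by
    intro i; simp [hb, div_pow]
  set u : Fin d → ℝ := fun i => W' i * x i with hu
  set v : Fin d → ℝ := fun i => W' i * y i with hv
  -- notation
  set A : ℝ := ∑ i, (W i * x i) * (W i * y i) with hA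
  set SU : ℝ := ∑ i, (W i * x i) ^ 2 with hSU
  set SV : ℝ := ∑ i, (W i * y i) ^ 2 with hSV
  set A' : ℝ := ∑ i, u i * v i with hA'
  set SU' : ℝ := ∑ i, u i ^ 2 with hSU'
  set SV' : ℝ := ∑ i, v i ^ 2 with hSV'
  have hArw : A = ∑ i, (b i * u i) * (b i * v i) :=
    Finset.sum_congr rfl fun i _ => by rw [hbrw i, hbrw' i]
  have hSUrw : SU = ∑ i, (b i * u i) ^ 2 :=
    Finset.sum_congr rfl fun i _ => by rw [hbrw i]
  have hSVrw : SV = ∑ i, (b i * v i) ^ 2 :=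
    Finset.sum_congr rfl fun i _ => by rw [hbrw' i]
  -- positivity of the sums
  obtain ⟨ix, hix⟩ := Function.ne_iff.mp hx
  obtain ⟨iy, hiy⟩ := Function.ne_iff.mp hy
  have hSU'pos : 0 < SU' := by
    refine Finset.sum_pos' (fun i _ => sq_nonneg _) ⟨ix, Finset.mem_univ ix, ?_⟩
    have : u ix ≠ 0 := mul_ne_zero (hW' ix).ne' hix
    positivity
  have hSV'pos : 0 < SV' := by
    refine Finset.sum_pos' (fun i _ => sq_nonneg _) ⟨iy, Finset.mem_univ iy, ?_⟩
    have : v iy ≠ 0 := mul_ne_zero (hW' iy).ne' hiy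
    positivity
  have hSUpos : 0 < SU := by
    refine Finset.sum_pos' (fun i _ => sq_nonneg _) ⟨ix, Finset.mem_univ ix, ?_⟩
    have : W ix * x ix ≠ 0 := mul_ne_zero (hW ix).ne' hix
    positivity
  have hSVpos : 0 < SV := by
    refine Finset.sum_pos' (fun i _ => sq_nonneg _) ⟨iy, Finset.mem_univ iy, ?_⟩
    have : W iy * y iy ≠ 0 := mul_ne_zero (hW iy).ne' hiy
    positivity
  set T : ℝ := Real.sqrt SU' * Real.sqrt SV' with hT
  set DD : ℝ := Real.sqrt SU * Real.sqrt SV with hDD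
  have hTpos : 0 < T := mul_pos (Real.sqrt_pos.mpr hSU'pos) (Real.sqrt_pos.mpr hSV'pos)
  have hDDpos : 0 < DD := mul_pos (Real.sqrt_pos.mpr hSUpos) (Real.sqrt_pos.mpr hSVpos)
  -- S' ≤ cos (c*R)
  have habs' : |A'| ≤ T := abs_inner_le u v
  have hS'le : A' / T ≤ 1 := by
    rw [div_le_one hTpos]; exact le_trans (le_abs_self _) habs'
  have hS'ge : -1 ≤ A' / T := by
    rw [le_div_iff₀ hTpos]; linarith [neg_abs_le A']
  have hcR0 : 0 ≤ c * R := by positivity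
  have hcos : A' / T ≤ Real.cos (c * R) := by
    have := Real.cos_le_cos_of_nonneg_of_le_pi hcR0 (Real.arccos_le_pi _) h
    rwa [Real.cos_arccos hS'ge hS'le] at this
  -- |A| ≤ DD
  have habs : |A| ≤ DD := by
    rw [hArw, hDD, hSUrw, hSVrw]
    exact abs_inner_le (fun i => b i * u i) (fun i => b i * v i)
  have hSle1 : A / DD ≤ 1 := by
    rw [div_le_one hDDpos]; exact le_trans (le_abs_self _) habs
  -- DD ≥ N * T
  have hsqN : Real.sqrt N * Real.sqrt N = N := Real.mul_self_sqrt hN0.le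
  have hNu : Real.sqrt N * Real.sqrt SU' ≤ Real.sqrt SU := by
    rw [← Real.sqrt_mul hN0.le]
    apply Real.sqrt_le_sqrt
    rw [hSUrw, hSU', Finset.mul_sum]
    apply Finset.sum_le_sum
    intro i _
    have h1 : N ≤ (b i) ^ 2 := by rw [hbsq i]; exact (hbound i).1
    have h2 : (b i * u i) ^ 2 = (b i)^2 * u i ^2 := by ring
    rw [h2]
    exact mul_le_mul_of_nonneg_right h1 (sq_nonneg _)
  have hNv : Real.sqrt N * Real.sqrt SV' ≤ Real.sqrt SV := by
    rw [← Real.sqrt_mul hN0.le]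
    apply Real.sqrt_le_sqrt
    rw [hSVrw, hSV', Finset.mul_sum]
    apply Finset.sum_le_sum
    intro i _
    have h1 : N ≤ (b i) ^ 2 := by rw [hbsq i]; exact (hbound i).1
    have h2 : (b i * v i) ^ 2 = (b i)^2 * v i ^2 := by ring
    rw [h2]
    exact mul_le_mul_of_nonneg_right h1 (sq_nonneg _)
  have hNT : N * T ≤ DD := by
    have := mul_le_mul hNu hNv (by positivity) (Real.sqrt_nonneg _)
    calc N * T = (Real.sqrt N * Real.sqrt SU') * (Real.sqrt N * Real.sqrt SV') := by
          rw [hT]; linear_combination (-(Real.sqrt SU' * Real.sqrt SV')) * hsqN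
      _ ≤ DD := this
  -- key inequality: A + DD ≤ M * (T + A')
  have hkey : A + DD ≤ M * (T + A') := by
    have := key_ineq b u v M hM0.le (fun i => by rw [hbsq i]; exact (hbound i).2)
    rw [← hArw, ← hSUrw, ← hSVrw, ← hA', ← hSU', ← hSV', ← hT, ← hDD] at this
    linarith [this]
  -- conclude S ≤ M/N cos(cR) + (M-N)/N
  have hcc : -1 ≤ Real.cos (c * R) := Real.neg_one_le_cos _
  set cc : ℝ := Real.cos (c * R) with hccdef
  have hmain : A / DD ≤ (M * cc + M - N) / N := by
    have hA'cc : A' ≤ cc * T := by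
      have := (div_le_iff₀ hTpos).mp hcos; linarith
    have h1 : A ≤ M * (1 + cc) * T - DD := by
      nlinarith [hkey, mul_le_mul_of_nonneg_left hA'cc hM0.le]
    have h2 : M * (1 + cc) * (N * T) ≤ M * (1 + cc) * DD :=
      mul_le_mul_of_nonneg_left hNT (mul_nonneg hM0.le (by linarith))
    have h3 : A * N ≤ (M * (1 + cc) * T - DD) * N := mul_le_mul_of_nonneg_right h1 hN0.le
    rw [div_le_div_iff₀ hDDpos hN0]
    nlinarith [h2, h3]
  have hrw : (M * cc + M - N) / N = M / N * cc + (M - N) / N := by ring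
  rw [hrw] at hmain
  exact _root_.antitone_arccos (le_min hSle1 hmain)
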